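/- Let μ be a rotationally invariant locally finite Borel measure on ℝ^d, 1 ≤ p < ∞, q = p/(p-1). Fix R > 0 and v ∈ (0,1), set H = R√(1+v²), and assume μ(B(0,vR)) > 0. Then the best weak type (p,p) constant c_{p,d,μ} of the centered maximal operator M_μ satisfies c_{p,d,μ} ≥ μ(B(0,vR))^{1/q} μ(B(0,R))^{1/p} / (2 μ(B(Re_1, H))). -/

import Mathlib

open MeasureTheory Metric
open scoped ENNReal RealInnerProductSpace

/-- Centered Hardy–Littlewood maximal function (ℝ≥0∞-valued). -/
noncomputable def maxFn {d : ℕ} (μ : Measure (EuclideanSpace ℝ (Fin d)))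
    (g : EuclideanSpace ℝ (Fin d) → ℝ) (x : EuclideanSpace ℝ (Fin d)) : ℝ≥0∞ :=
  ⨆ r : {r : ℝ // 0 < r ∧ 0 < μ (closedBall x r)},
    (∫⁻ y in closedBall x r.1, ENNReal.ofReal |g y| ∂μ) / μ (closedBall x r.1)

/-- `c` is an admissible constant in the weak type `(p,p)` inequality for `M_μ`. -/
def WeakType {d : ℕ} (μ : Measure (EuclideanSpace ℝ (Fin d))) (p c : ℝ) : Prop :=
  ∀ g : EuclideanSpace ℝ (Fin d) → ℝ, MemLp g (ENNReal.ofReal p) μ →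
    ∀ α : ℝ, 0 < α →
      μ {x | ENNReal.ofReal α ≤ maxFn μ g x} ≤
        ENNReal.ofReal ((c * (eLpNorm g (ENNReal.ofReal p) μ).toReal / α) ^ p)

set_option maxHeartbeats 1000000 in
/-- Lower bound for the best weak type `(p,p)` constant of a rotationally
invariant measure: any admissible constant `c` satisfies
`c ≥ μ(B(0,vR))^{1/q} μ(B(0,R))^{1/p} / (2 μ(B(Re₁, H)))`. -/
theorem weak_const_lower_bound {d : ℕ} (hd : 1 ≤ d)
    (μ : Measure (EuclideanSpace ℝ (Fin d))) [IsLocallyFiniteMeasure μ]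
    (hrot : ∀ T : EuclideanSpace ℝ (Fin d) ≃ₗᵢ[ℝ] EuclideanSpace ℝ (Fin d),
      Measure.map T μ = μ)
    (p : ℝ) (hp : 1 ≤ p) (q : ℝ) (hq : q = p / (p - 1))
    (R v : ℝ) (hR : 0 < R) (hv : v ∈ Set.Ioo (0 : ℝ) 1)
    (H : ℝ) (hH : H = R * Real.sqrt (1 + v ^ 2))
    (hpos : 0 < μ (closedBall 0 (v * R)))
    (c : ℝ) (hc : 0 ≤ c) (hweak : WeakType μ p c) :
    (μ (closedBall 0 (v * R))).toReal ^ (1 / q) * (μ (closedBall 0 R)).toReal ^ (1 / p) /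
        (2 * (μ (closedBall (R • EuclideanSpace.single (⟨0, by omega⟩ : Fin d) (1 : ℝ)) H)).toReal)
      ≤ c := by
  obtain ⟨hv0, hv1⟩ := hv
  have hvR : 0 < v * R := mul_pos hv0 hR
  set e₁ : EuclideanSpace ℝ (Fin d) :=
    EuclideanSpace.single (⟨0, by omega⟩ : Fin d) (1 : ℝ) with he₁
  set x₁ : EuclideanSpace ℝ (Fin d) := R • e₁ with hx₁def
  have hne₁ : ‖e₁‖ = 1 := by rw [he₁, EuclideanSpace.norm_single]; norm_num
  have hnx₁ : ‖x₁‖ = R := by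
    rw [hx₁def, norm_smul, hne₁, Real.norm_eq_abs, abs_of_pos hR, mul_one]
  set Bv : Set (EuclideanSpace ℝ (Fin d)) := closedBall 0 (v * R) with hBvdef
  set Out : Set (EuclideanSpace ℝ (Fin d)) := {y | v * R < ‖y‖} with hOutdef
  have hBvmeas : MeasurableSet Bv := measurableSet_closedBall
  have hOutBv : Out = Bvᶜ := by
    ext y
    simp [hOutdef, hBvdef, mem_closedBall, dist_zero_right, not_le]
  have hOutmeas : MeasurableSet Out := by rw [hOutBv]; exact hBvmeas.compl
  have hfin : ∀ (x : EuclideanSpace ℝ (Fin d)) (r : ℝ), μ (closedBall x r) ≠ ∞ :=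
    fun x r => ((isCompact_closedBall x r).measure_lt_top).ne
  have hmap : ∀ (T : EuclideanSpace ℝ (Fin d) ≃ₗᵢ[ℝ] EuclideanSpace ℝ (Fin d))
      (A : Set (EuclideanSpace ℝ (Fin d))), MeasurableSet A → μ A = μ (T ⁻¹' A) := by
    intro T A hA
    conv_lhs => rw [← hrot T]
    exact Measure.map_apply T.continuous.measurable hA
  have hinner_meas : ∀ x : EuclideanSpace ℝ (Fin d),
      MeasurableSet {y : EuclideanSpace ℝ (Fin d) | 0 ≤ ⟪y, x⟫} := fun x =>
    (isClosed_le continuous_const (continuous_id.inner continuous_const)).measurableSet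
  -- the half-ball in direction `x` carries at least half of the mass of `Bv`
  have hhalf : ∀ x : EuclideanSpace ℝ (Fin d),
      μ Bv ≤ 2 * μ (Bv ∩ {y | 0 ≤ ⟪y, x⟫}) := by
    intro x
    have hmA : MeasurableSet (Bv ∩ {y | 0 ≤ ⟪y, x⟫}) := hBvmeas.inter (hinner_meas x)
    have hpre : (LinearIsometryEquiv.neg ℝ (E := EuclideanSpace ℝ (Fin d))) ⁻¹'
        (Bv ∩ {y | 0 ≤ ⟪y, x⟫}) = Bv ∩ {y | ⟪y, x⟫ ≤ 0} := by
      ext y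
      simp [hBvdef, mem_closedBall, dist_zero_right, inner_neg_left, neg_nonneg]
    have hEq : μ (Bv ∩ {y | ⟪y, x⟫ ≤ 0}) = μ (Bv ∩ {y | 0 ≤ ⟪y, x⟫}) := by
      conv_rhs => rw [hmap (LinearIsometryEquiv.neg ℝ) _ hmA]
      rw [hpre]
    calc μ Bv ≤ μ ((Bv ∩ {y | 0 ≤ ⟪y, x⟫}) ∪ (Bv ∩ {y | ⟪y, x⟫ ≤ 0})) := by
          apply measure_mono
          intro y hy
          rcases le_total 0 (⟪y, x⟫) with h | h
          · exact Or.inl ⟨hy, h⟩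
          · exact Or.inr ⟨hy, h⟩
      _ ≤ μ (Bv ∩ {y | 0 ≤ ⟪y, x⟫}) + μ (Bv ∩ {y | ⟪y, x⟫ ≤ 0}) := measure_union_le _ _
      _ = 2 * μ (Bv ∩ {y | 0 ≤ ⟪y, x⟫}) := by rw [hEq, two_mul]
  -- the half-ball in direction x is inside the ball around x of radius √(‖x‖² + (vR)²)
  have hgeo1 : ∀ x : EuclideanSpace ℝ (Fin d),
      Bv ∩ {y | 0 ≤ ⟪y, x⟫} ⊆ closedBall x (Real.sqrt (‖x‖ ^ 2 + (v * R) ^ 2)) := by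
    intro x y hy
    obtain ⟨hy1, hy2⟩ := hy
    rw [Set.mem_setOf_eq] at hy2
    have hyn : ‖y‖ ≤ v * R := by
      rw [hBvdef, mem_closedBall, dist_zero_right] at hy1; exact hy1
    rw [mem_closedBall, dist_eq_norm]
    have h1 : ‖y - x‖ ^ 2 = ‖y‖ ^ 2 - 2 * ⟪y, x⟫ + ‖x‖ ^ 2 := norm_sub_sq_real y x
    have h2 : ‖y - x‖ ^ 2 ≤ ‖x‖ ^ 2 + (v * R) ^ 2 := by
      nlinarith [norm_nonneg y, hy2, hyn, h1,
        mul_nonneg (sub_nonneg.mpr hyn) (by positivity : (0:ℝ) ≤ v * R + ‖y‖)]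
    calc ‖y - x‖ = Real.sqrt (‖y - x‖ ^ 2) := (Real.sqrt_sq (norm_nonneg _)).symm
      _ ≤ Real.sqrt (‖x‖ ^ 2 + (v * R) ^ 2) := Real.sqrt_le_sqrt h2
  -- outside `Bv`, the ball around x of radius √(‖x‖² + (vR)²) is inside the
  -- ball of radius H around the radial projection of x to the sphere of radius R
  have hgeo2 : ∀ x : EuclideanSpace ℝ (Fin d), x ≠ 0 → ‖x‖ ≤ R →
      closedBall x (Real.sqrt (‖x‖ ^ 2 + (v * R) ^ 2)) ∩ Out ⊆
        closedBall ((R / ‖x‖) • x) H := by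
    intro x hx0 hxR y hy
    obtain ⟨hy1, hy2⟩ := hy
    have ht : 0 < ‖x‖ := norm_pos_iff.mpr hx0
    rw [mem_closedBall, dist_eq_norm] at hy1 ⊢
    rw [hOutdef, Set.mem_setOf_eq] at hy2
    have h1 : ‖y - x‖ ^ 2 ≤ ‖x‖ ^ 2 + (v * R) ^ 2 := by
      have h := pow_le_pow_left₀ (norm_nonneg _) hy1 2
      rwa [Real.sq_sqrt (by positivity)] at h
    have h2 : ‖y - x‖ ^ 2 = ‖y‖ ^ 2 - 2 * ⟪y, x⟫ + ‖x‖ ^ 2 := norm_sub_sq_real y x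
    have h3 : ‖y‖ ^ 2 - (v * R) ^ 2 ≤ 2 * ⟪y, x⟫ := by nlinarith [h1, h2]
    have hA : 0 ≤ ‖y‖ ^ 2 - (v * R) ^ 2 :=
      sub_nonneg.mpr (pow_le_pow_left₀ hvR.le hy2.le 2)
    have hnorms : ‖(R / ‖x‖) • x‖ = R := by
      rw [norm_smul, Real.norm_eq_abs, abs_of_pos (div_pos hR ht), div_mul_cancel₀ _ ht.ne']
    have h4 : ‖y - (R / ‖x‖) • x‖ ^ 2
        = ‖y‖ ^ 2 - 2 * ((R / ‖x‖) * ⟪y, x⟫) + R ^ 2 := by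
      have h := norm_sub_sq_real y ((R / ‖x‖) • x)
      rwa [real_inner_smul_right, hnorms] at h
    have hfrac : 1 ≤ R / ‖x‖ := (one_le_div ht).mpr hxR
    have hH0 : 0 ≤ H := by rw [hH]; positivity
    have hH2 : H ^ 2 = R ^ 2 * (1 + v ^ 2) := by
      rw [hH, mul_pow, Real.sq_sqrt (by positivity)]
    have h5 : ‖y - (R / ‖x‖) • x‖ ^ 2 ≤ H ^ 2 := by
      rw [h4, hH2]
      nlinarith [mul_le_mul_of_nonneg_left h3 (by linarith : (0:ℝ) ≤ R / ‖x‖),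
        mul_nonneg (by linarith : (0:ℝ) ≤ R / ‖x‖ - 1) hA]
    calc ‖y - (R / ‖x‖) • x‖ = Real.sqrt (‖y - (R / ‖x‖) • x‖ ^ 2) :=
          (Real.sqrt_sq (norm_nonneg _)).symm
      _ ≤ Real.sqrt (H ^ 2) := Real.sqrt_le_sqrt h5
      _ = H := Real.sqrt_sq hH0
  have hHx₁ : Real.sqrt (‖x₁‖ ^ 2 + (v * R) ^ 2) = H := by
    rw [hnx₁, hH, show R ^ 2 + (v * R) ^ 2 = R ^ 2 * (1 + v ^ 2) by ring,
      Real.sqrt_mul (by positivity), Real.sqrt_sq hR.le]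
  -- transporting outside mass to the ball around x₁ via a reflection
  have htrans : ∀ x : EuclideanSpace ℝ (Fin d), ‖x‖ = R →
      μ (closedBall x H ∩ Out) = μ (closedBall x₁ H ∩ Out) := by
    intro x hx
    set T := Submodule.reflection (ℝ ∙ (x - x₁))ᗮ with hT
    have hTx : T x = x₁ := Submodule.reflection_sub (by rw [hx, hnx₁])
    have hTx₁ : T x₁ = x := by rw [← hTx, Submodule.reflection_reflection]
    have hmA : MeasurableSet (closedBall x H ∩ Out) :=
      measurableSet_closedBall.inter hOutmeas
    rw [hmap T _ hmA]
    congr 1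
    ext y
    simp only [Set.mem_preimage, Set.mem_inter_iff, mem_closedBall, hOutdef,
      Set.mem_setOf_eq]
    constructor
    · rintro ⟨h1, h2⟩
      refine ⟨?_, ?_⟩
      · have h1' : dist (T y) (T x₁) ≤ H := by rwa [hTx₁]
        rwa [T.dist_map] at h1'
      · rwa [T.norm_map] at h2
    · rintro ⟨h1, h2⟩
      refine ⟨?_, ?_⟩
      · rw [← hTx₁]
        rw [T.dist_map]
        exact h1
      · rwa [T.norm_map]
  -- abbreviations
  set gfun : EuclideanSpace ℝ (Fin d) → ℝ := Bv.indicator (fun _ => (1:ℝ)) with hgdef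
  set B := μ Bv with hBdef
  set X := μ (closedBall x₁ H) with hXdef
  set Ostar := μ (closedBall x₁ H ∩ Out) with hOdef
  have hm' : B ≤ 2 * μ (Bv ∩ {y | 0 ≤ ⟪y, x₁⟫}) := hhalf x₁
  have hhx₁sub : Bv ∩ {y | 0 ≤ ⟪y, x₁⟫} ⊆ closedBall x₁ H := by
    have h := hgeo1 x₁
    rwa [hHx₁] at h
  have hXsum : μ (Bv ∩ {y | 0 ≤ ⟪y, x₁⟫}) + Ostar ≤ X := by
    have hdisj : Disjoint (Bv ∩ {y | 0 ≤ ⟪y, x₁⟫}) (closedBall x₁ H ∩ Out) := by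
      apply Set.disjoint_left.mpr
      rintro y ⟨hy1, -⟩ ⟨-, hy2⟩
      rw [hOutBv] at hy2
      exact hy2 hy1
    calc μ (Bv ∩ {y | 0 ≤ ⟪y, x₁⟫}) + Ostar
        = μ ((Bv ∩ {y | 0 ≤ ⟪y, x₁⟫}) ∪ (closedBall x₁ H ∩ Out)) :=
          (measure_union hdisj (measurableSet_closedBall.inter hOutmeas)).symm
      _ ≤ X := measure_mono (Set.union_subset hhx₁sub Set.inter_subset_left)
  have hB0 : B ≠ 0 := hpos.ne'
  have hBtop : B ≠ ∞ := hfin _ _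
  have hXtop : X ≠ ∞ := hfin _ _
  have hX0 : X ≠ 0 := by
    intro h
    have h1 : μ (Bv ∩ {y | 0 ≤ ⟪y, x₁⟫}) = 0 := by
      have := le_trans (le_add_right le_rfl) hXsum
      rw [h] at this
      exact le_antisymm this zero_le
    rw [h1, mul_zero] at hm'
    exact hB0 (le_antisymm hm' zero_le)
  have h2X0 : (2 : ℝ≥0∞) * X ≠ 0 := by
    simp [hX0]
  have h2Xtop : (2 : ℝ≥0∞) * X ≠ ∞ := ENNReal.mul_ne_top (by norm_num) hXtop
  -- the pointwise lower bound on the maximal function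
  have hmain : ∀ x : EuclideanSpace ℝ (Fin d),
      x ∈ closedBall (0 : EuclideanSpace ℝ (Fin d)) R →
      B / (2 * X) ≤ maxFn μ gfun x := by
    intro x hx
    have hxR : ‖x‖ ≤ R := by rwa [mem_closedBall, dist_zero_right] at hx
    set ρ := Real.sqrt (‖x‖ ^ 2 + (v * R) ^ 2) with hρ
    have hρpos : 0 < ρ := Real.sqrt_pos.mpr (by positivity)
    set N := μ (Bv ∩ closedBall x ρ) with hN
    have hρ0 : x = 0 → ρ = v * R := by
      intro h
      rw [hρ, h, norm_zero, show (0:ℝ) ^ 2 + (v * R) ^ 2 = (v * R) ^ 2 by ring,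
        Real.sqrt_sq hvR.le]
    have hBN : B ≤ 2 * N := by
      by_cases hx0 : x = 0
      · have hEq : Bv ∩ closedBall x ρ = Bv := by
          rw [hx0, hρ0 hx0, ← hBvdef, Set.inter_self]
        rw [hN, hEq, two_mul]
        exact le_add_self
      · calc B ≤ 2 * μ (Bv ∩ {y | 0 ≤ ⟪y, x⟫}) := hhalf x
          _ ≤ 2 * N := by
            apply mul_le_mul_right
            apply measure_mono
            intro y hy
            exact ⟨hy.1, hgeo1 x hy⟩
    have hON : μ (closedBall x ρ ∩ Out) ≤ Ostar := by
      by_cases hx0 : x = 0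
      · have hEq : closedBall x ρ ∩ Out = (∅ : Set (EuclideanSpace ℝ (Fin d))) := by
          rw [hx0, hρ0 hx0, ← hBvdef, hOutBv, Set.inter_compl_self]
        rw [hEq, measure_empty]
        exact zero_le
      · have hnorms : ‖(R / ‖x‖) • x‖ = R := by
          have ht : 0 < ‖x‖ := norm_pos_iff.mpr hx0
          rw [norm_smul, Real.norm_eq_abs, abs_of_pos (div_pos hR ht),
            div_mul_cancel₀ _ ht.ne']
        calc μ (closedBall x ρ ∩ Out)
            ≤ μ (closedBall ((R / ‖x‖) • x) H ∩ Out) :=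
              measure_mono (fun y hy => ⟨hgeo2 x hx0 hxR hy, hy.2⟩)
          _ = Ostar := htrans _ hnorms
    have hDN : μ (closedBall x ρ) ≤ N + Ostar := by
      have hsplit : closedBall x ρ ⊆ (Bv ∩ closedBall x ρ) ∪ (closedBall x ρ ∩ Out) := by
        intro y hy
        by_cases hyB : y ∈ Bv
        · exact Or.inl ⟨hyB, hy⟩
        · refine Or.inr ⟨hy, ?_⟩
          rw [hOutBv]
          exact hyB
      calc μ (closedBall x ρ)
          ≤ μ ((Bv ∩ closedBall x ρ) ∪ (closedBall x ρ ∩ Out)) := measure_mono hsplit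
        _ ≤ N + μ (closedBall x ρ ∩ Out) := measure_union_le _ _
        _ ≤ N + Ostar := add_le_add le_rfl hON
    have hNpos : 0 < N := by
      rcases (zero_le : (0:ℝ≥0∞) ≤ N).lt_or_eq with h | h
      · exact h
      · exfalso
        rw [← h, mul_zero] at hBN
        exact hB0 (le_antisymm hBN zero_le)
    have hDpos : 0 < μ (closedBall x ρ) :=
      lt_of_lt_of_le hNpos (measure_mono Set.inter_subset_right)
    have hDtop : μ (closedBall x ρ) ≠ ∞ := hfin x ρ
    have hlint : ∫⁻ y in closedBall x ρ, ENNReal.ofReal |gfun y| ∂μ = N := by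
      have hptwise : ∀ y, ENNReal.ofReal |gfun y|
          = Bv.indicator (fun _ => (1 : ℝ≥0∞)) y := by
        intro y
        by_cases hy : y ∈ Bv
        · simp [hgdef, hy]
        · simp [hgdef, hy]
      simp only [hptwise]
      rw [lintegral_indicator hBvmeas, setLIntegral_one,
        Measure.restrict_apply hBvmeas]
    have hstep : B / (2 * X) ≤ N / μ (closedBall x ρ) := by
      rw [ENNReal.le_div_iff_mul_le (Or.inl hDpos.ne') (Or.inl hDtop)]
      have hkey : B * μ (closedBall x ρ) ≤ (2 * X) * N := by
        calc B * μ (closedBall x ρ) ≤ B * (N + Ostar) := mul_le_mul_right hDN _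
          _ = B * N + B * Ostar := mul_add _ _ _
          _ ≤ B * N + (2 * N) * Ostar := add_le_add le_rfl (mul_le_mul_left hBN _)
          _ = (B + 2 * Ostar) * N := by ring
          _ ≤ (2 * X) * N := by
            apply mul_le_mul_left
            calc B + 2 * Ostar
                ≤ 2 * μ (Bv ∩ {y | 0 ≤ ⟪y, x₁⟫}) + 2 * Ostar := add_le_add hm' le_rfl
              _ = 2 * (μ (Bv ∩ {y | 0 ≤ ⟪y, x₁⟫}) + Ostar) := by ring
              _ ≤ 2 * X := mul_le_mul_right hXsum _
      calc B / (2 * X) * μ (closedBall x ρ) = B * μ (closedBall x ρ) / (2 * X) := by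
            rw [div_eq_mul_inv, div_eq_mul_inv]; ring
        _ ≤ (2 * X) * N / (2 * X) := ENNReal.div_le_div_right hkey _
        _ = N := by
            rw [mul_div_assoc]
            exact ENNReal.mul_div_cancel h2X0 h2Xtop
    refine le_trans hstep ?_
    unfold maxFn
    refine le_iSup_of_le ⟨ρ, hρpos, hDpos⟩ ?_
    rw [hlint]
  -- apply the weak type inequality
  set α' : ℝ≥0∞ := B / (2 * X) with hα'
  have hα'0 : α' ≠ 0 := (ENNReal.div_pos hB0 h2Xtop).ne'
  have hα'top : α' ≠ ∞ := by
    rw [hα']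
    simp [ENNReal.div_eq_top, hBtop, hX0]
  set α := α'.toReal with hαdef
  have hαpos : 0 < α := ENNReal.toReal_pos hα'0 hα'top
  have hofα : ENNReal.ofReal α = α' := ENNReal.ofReal_toReal hα'top
  have hg_mem : MemLp gfun (ENNReal.ofReal p) μ :=
    memLp_indicator_const _ hBvmeas _ (Or.inr hBtop)
  have hweak' := hweak gfun hg_mem α hαpos
  have hsub : μ (closedBall (0 : EuclideanSpace ℝ (Fin d)) R)
      ≤ μ {x | ENNReal.ofReal α ≤ maxFn μ gfun x} := by
    apply measure_mono
    intro x hx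
    rw [Set.mem_setOf_eq, hofα]
    exact hmain x hx
  have hfinal := le_trans hsub hweak'
  -- compute the Lᵖ norm of the indicator
  have hp0 : p ≠ 0 := by linarith
  have hpp : (ENNReal.ofReal p) ≠ 0 := by
    simp only [ne_eq, ENNReal.ofReal_eq_zero, not_le]
    linarith
  have hpt : (ENNReal.ofReal p) ≠ ∞ := ENNReal.ofReal_ne_top
  have hSnorm : (eLpNorm gfun (ENNReal.ofReal p) μ).toReal = B.toReal ^ (1 / p) := by
    rw [hgdef, eLpNorm_indicator_const hBvmeas hpp hpt,
      ENNReal.toReal_ofReal (by linarith : (0:ℝ) ≤ p)]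
    simp only [enorm_one, one_mul]
    rw [← ENNReal.toReal_rpow, ← hBdef]
  rw [hSnorm] at hfinal
  -- real arithmetic
  set a := B.toReal with ha_def
  set b := (μ (closedBall (0 : EuclideanSpace ℝ (Fin d)) R)).toReal with hb_def
  set Dr := X.toReal with hDr_def
  have ha : 0 < a := ENNReal.toReal_pos hB0 hBtop
  have hDrpos : 0 < Dr := ENNReal.toReal_pos hX0 hXtop
  have hbpos : 0 < b := by
    apply ENNReal.toReal_pos _ (hfin _ _)
    intro h
    apply hB0
    apply le_antisymm _ zero_le
    rw [← h]
    exact measure_mono (closedBall_subset_closedBall (by nlinarith))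
  have hαval : α = a / (2 * Dr) := by
    rw [hαdef, hα', ENNReal.toReal_div, ENNReal.toReal_mul]
    norm_num
    rfl
  have hK : 0 ≤ c * a ^ (1 / p) / α := by positivity
  have hb_le : b ≤ (c * a ^ (1 / p) / α) ^ p :=
    ENNReal.toReal_le_of_le_ofReal (Real.rpow_nonneg hK p) hfinal
  have hroot : b ^ (1 / p) ≤ c * a ^ (1 / p) / α := by
    have h1 : b ^ (1 / p) ≤ ((c * a ^ (1 / p) / α) ^ p) ^ (1 / p) :=
      Real.rpow_le_rpow hbpos.le hb_le (by positivity)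
    rwa [← Real.rpow_mul hK, mul_one_div_cancel hp0, Real.rpow_one] at h1
  have hchain : α * b ^ (1 / p) ≤ c * a ^ (1 / p) := by
    have h := (le_div_iff₀ hαpos).mp hroot
    linarith [h]
  have h1q : 1 / q = 1 - 1 / p := by
    rcases eq_or_lt_of_le hp with h | h
    · rw [hq, ← h]
      norm_num
    · have hp1 : p - 1 ≠ 0 := by linarith
      rw [hq, one_div_div, sub_div, div_self hp0]
  have hap : 0 < a ^ (1 / p) := Real.rpow_pos_of_pos ha _
  have hfinal2 : a ^ (1 / q) * b ^ (1 / p) / (2 * Dr) ≤ c := by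
    rw [div_le_iff₀ (by positivity : (0:ℝ) < 2 * Dr), h1q, Real.rpow_sub ha,
      Real.rpow_one, div_mul_eq_mul_div, div_le_iff₀ hap]
    have hc2' : a * b ^ (1 / p) ≤ c * a ^ (1 / p) * (2 * Dr) := by
      have h := hchain
      rw [hαval, div_mul_eq_mul_div, div_le_iff₀ (by positivity : (0:ℝ) < 2 * Dr)] at h
      exact h
    calc a * b ^ (1 / p) ≤ c * a ^ (1 / p) * (2 * Dr) := hc2'
      _ = c * (2 * Dr) * a ^ (1 / p) := by ring
  exact hfinal2
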